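/- arXiv:0812.0390 — 6 statements merged into one kernel-verified Lean document; each statement's English description precedes it below -/
import Mathlib

section
/- If in addition ω(s)/s → 0 as s → +∞, then z(t)/|t| → 0 both as t → +∞ and as t → −∞. -/
open Real MeasureTheory Set Filter Topology

/-- Integrability of `exp s * |s|` on `(-∞, 0]`. -/
lemma ou_int_exp_abs : IntegrableOn (fun s => Real.exp s * |s|) (Set.Iic (0:ℝ)) := by
  refine integrableOn_Iic_of_intervalIntegral_norm_bounded 1 0
    (fun y => ((continuous_exp.mul continuous_abs).integrableOn_Ioc)) tendsto_id ?_
  filter_upwards [Iic_mem_atBot (0:ℝ)] with y hy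
  have hcalc : (∫ x in y..0, ‖Real.exp x * |x|‖) = ∫ x in y..0, -x * Real.exp x := by
    apply intervalIntegral.integral_congr
    intro x hx
    rw [Set.uIcc_of_le hy] at hx
    have hx0 : x ≤ 0 := hx.2
    show ‖Real.exp x * |x|‖ = -x * Real.exp x
    rw [Real.norm_eq_abs, abs_of_nonneg (by positivity), abs_of_nonpos hx0]
    ring
  simp only [id_eq]
  rw [hcalc]
  have hderiv : ∀ x ∈ Set.uIcc y (0:ℝ),
      HasDerivAt (fun x => (1 - x) * Real.exp x) (-x * Real.exp x) x := by
    intro x _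
    have h : HasDerivAt (fun x => (1 - x) * Real.exp x)
        (-1 * Real.exp x + (1 - x) * Real.exp x) x :=
      ((hasDerivAt_id x).const_sub 1).mul (Real.hasDerivAt_exp x)
    convert h using 1
    ring
  rw [intervalIntegral.integral_eq_sub_of_hasDerivAt hderiv
    ((continuous_neg.mul continuous_exp).intervalIntegrable y 0)]
  have h1 : 0 ≤ (1 - y) * Real.exp y := by
    have := Real.exp_pos y
    have hy' : y ≤ 0 := hy
    nlinarith
  simp only [Real.exp_zero]
  nlinarith

/-- Linear growth bound from sublinearity at both infinities plus continuity. -/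
lemma ou_linear_growth {ω : ℝ → ℝ} (hωcont : Continuous ω)
    (hsub_bot : Filter.Tendsto (fun s => ω s / s) Filter.atBot (nhds 0))
    (hsub_top : Filter.Tendsto (fun s => ω s / s) Filter.atTop (nhds 0))
    {ε : ℝ} (hε : 0 < ε) : ∃ C : ℝ, 0 ≤ C ∧ ∀ u : ℝ, |ω u| ≤ ε * |u| + C := by
  have htop : ∀ᶠ s in atTop, |ω s / s| < ε := by
    have := Metric.tendsto_nhds.mp hsub_top ε hε
    simpa only [Real.dist_eq, sub_zero] using this
  have hbot : ∀ᶠ s in atBot, |ω s / s| < ε := by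
    have := Metric.tendsto_nhds.mp hsub_bot ε hε
    simpa only [Real.dist_eq, sub_zero] using this
  obtain ⟨M, hM⟩ := eventually_atTop.mp htop
  obtain ⟨m, hm⟩ := eventually_atBot.mp hbot
  set a : ℝ := min m (-1) with ha
  set b : ℝ := max M 1 with hb
  obtain ⟨C, hC⟩ := (isCompact_Icc (a := a) (b := b)).exists_bound_of_continuousOn
    hωcont.continuousOn
  refine ⟨max C 0, le_max_right _ _, fun u => ?_⟩
  have habs : 0 ≤ |u| := abs_nonneg u
  rcases le_or_gt u b with h1 | h1
  · rcases le_or_gt a u with h2 | h2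
    · have hCu : |ω u| ≤ C := by simpa [Real.norm_eq_abs] using hC u ⟨h2, h1⟩
      have : |ω u| ≤ max C 0 := hCu.trans (le_max_left _ _)
      nlinarith
    · have hu0 : u < 0 := lt_of_lt_of_le h2 ((min_le_right m (-1)).trans (by norm_num))
      have hum : u ≤ m := (h2.le).trans (min_le_left m (-1))
      have h := (hm u hum).le
      rw [abs_div] at h
      have h' : |ω u| ≤ ε * |u| := by
        rw [div_le_iff₀ (abs_pos.2 hu0.ne)] at h
        linarith [h]
      nlinarith [le_max_right C (0:ℝ)]
  · have hub : (1:ℝ) ≤ u := ((le_max_right M 1).trans h1.le)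
    have hu0 : (0:ℝ) < u := lt_of_lt_of_le one_pos hub
    have huM : M ≤ u := (le_max_left M 1).trans h1.le
    have h := (hM u huM).le
    rw [abs_div] at h
    have h' : |ω u| ≤ ε * |u| := by
      rw [div_le_iff₀ (abs_pos.2 hu0.ne')] at h
      linarith [h]
    nlinarith [le_max_right C (0:ℝ)]

/-- For the pathwise stationary Ornstein–Uhlenbeck process
`z t = σ ∫_{−∞}^0 e^s (ω (s+t) − ω t) ds` driven by a continuous path `ω` with `ω 0 = 0`
that is sublinear at both `−∞` and `+∞`, one has `z t / |t| → 0` as `t → ±∞`. -/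
theorem ou_sublinear
    (σ : ℝ) (ω : ℝ → ℝ) (hωcont : Continuous ω) (hω0 : ω 0 = 0)
    (hsub_bot : Filter.Tendsto (fun s => ω s / s) Filter.atBot (nhds 0))
    (hsub_top : Filter.Tendsto (fun s => ω s / s) Filter.atTop (nhds 0))
    (z : ℝ → ℝ)
    (hz : ∀ t : ℝ, z t = σ * ∫ s in Set.Iic (0:ℝ), Real.exp s * (ω (s + t) - ω t)) :
    Filter.Tendsto (fun t => z t / |t|) Filter.atTop (nhds 0) ∧
    Filter.Tendsto (fun t => z t / |t|) Filter.atBot (nhds 0) := by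
  -- the quantitative key estimate
  have key : ∀ δ : ℝ, 0 < δ → ∃ T : ℝ, 0 < T ∧ ∀ t : ℝ, T ≤ |t| → |z t| / |t| < δ := by
    intro δ hδ
    set ε : ℝ := δ / (4 * (|σ| + 1)) with hεdef
    have hε : 0 < ε := by
      have : 0 < 4 * (|σ| + 1) := by positivity
      exact div_pos hδ this
    obtain ⟨C, hC0, hC⟩ := ou_linear_growth hωcont hsub_bot hsub_top hε
    set B : ℝ := ∫ s in Set.Iic (0:ℝ), Real.exp s * |s| with hBdef
    have hB0 : 0 ≤ B := by
      apply setIntegral_nonneg measurableSet_Iic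
      intro s _
      positivity
    -- the pointwise bound
    have hbound : ∀ t : ℝ, |z t| ≤ |σ| * (ε * B + (2 * ε * |t| + 2 * C)) := by
      intro t
      rw [hz t, abs_mul]
      have hg1 : Integrable (fun s => ε * (Real.exp s * |s|))
          (volume.restrict (Set.Iic (0:ℝ))) := ou_int_exp_abs.const_mul ε
      have hg2 : Integrable (fun s => (2 * ε * |t| + 2 * C) * Real.exp s)
          (volume.restrict (Set.Iic (0:ℝ))) :=
        (integrableOn_exp_Iic 0).const_mul (2 * ε * |t| + 2 * C)
      have hg := hg1.add hg2
      have hle : |∫ s in Set.Iic (0:ℝ), Real.exp s * (ω (s + t) - ω t)| ≤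
          ∫ s in Set.Iic (0:ℝ),
            (ε * (Real.exp s * |s|) + (2 * ε * |t| + 2 * C) * Real.exp s) := by
        rw [← Real.norm_eq_abs]
        refine norm_integral_le_of_norm_le hg (Filter.Eventually.of_forall fun s => ?_)
        have hes : 0 < Real.exp s := Real.exp_pos s
        have h1 : |ω (s + t)| ≤ ε * |s + t| + C := hC (s + t)
        have h2 : |ω t| ≤ ε * |t| + C := hC t
        have h3 : |s + t| ≤ |s| + |t| := abs_add_le s t
        have h4 : |ω (s + t) - ω t| ≤ |ω (s + t)| + |ω t| := abs_sub _ _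
        rw [Real.norm_eq_abs, abs_mul, abs_of_pos hes]
        have h5 : |ω (s + t) - ω t| ≤ ε * |s| + 2 * ε * |t| + 2 * C := by
          nlinarith [abs_nonneg (s + t)]
        calc Real.exp s * |ω (s + t) - ω t|
            ≤ Real.exp s * (ε * |s| + 2 * ε * |t| + 2 * C) :=
              mul_le_mul_of_nonneg_left h5 hes.le
          _ = ε * (Real.exp s * |s|) + (2 * ε * |t| + 2 * C) * Real.exp s := by ring
      have hval : (∫ s in Set.Iic (0:ℝ),
          (ε * (Real.exp s * |s|) + (2 * ε * |t| + 2 * C) * Real.exp s)) =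
          ε * B + (2 * ε * |t| + 2 * C) := by
        rw [integral_add hg1 hg2, integral_const_mul, integral_const_mul,
          integral_exp_Iic_zero, ← hBdef]
        ring
      rw [hval] at hle
      exact mul_le_mul_of_nonneg_left hle (abs_nonneg σ)
    set A : ℝ := |σ| * (ε * B + 2 * C) with hAdef
    have hA0 : 0 ≤ A := by positivity
    refine ⟨max 1 ((A + 1) * (2 / δ)), lt_of_lt_of_le one_pos (le_max_left _ _), fun t ht => ?_⟩
    have ht1 : (1:ℝ) ≤ |t| := (le_max_left _ _).trans ht
    have ht0 : (0:ℝ) < |t| := lt_of_lt_of_le one_pos ht1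
    have ht2 : (A + 1) * (2 / δ) ≤ |t| := (le_max_right _ _).trans ht
    have hAt : (A + 1) * 2 ≤ |t| * δ := by
      have h := mul_le_mul_of_nonneg_right ht2 hδ.le
      calc (A + 1) * 2 = (A + 1) * (2 / δ) * δ := by field_simp
        _ ≤ |t| * δ := h
    have hσε : 2 * |σ| * ε ≤ δ / 2 := by
      have hεδ : ε * (4 * (|σ| + 1)) = δ := by
        rw [hεdef]; field_simp
      nlinarith [abs_nonneg σ, hε.le]
    rw [div_lt_iff₀ ht0]
    have hb := hbound t
    have heq : |σ| * (ε * B + (2 * ε * |t| + 2 * C)) = A + 2 * |σ| * ε * |t| := by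
      rw [hAdef]; ring
    rw [heq] at hb
    nlinarith
  constructor
  · rw [Metric.tendsto_nhds]
    intro δ hδ
    obtain ⟨T, hT0, hT⟩ := key δ hδ
    rw [eventually_atTop]
    refine ⟨T, fun t htT => ?_⟩
    have hTt : T ≤ |t| := le_trans htT (le_abs_self t)
    have := hT t hTt
    rwa [Real.dist_eq, sub_zero, abs_div, abs_abs]
  · rw [Metric.tendsto_nhds]
    intro δ hδ
    obtain ⟨T, hT0, hT⟩ := key δ hδ
    rw [eventually_atBot]
    refine ⟨-T, fun t htT => ?_⟩
    have hTt : T ≤ |t| := by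
      rw [abs_of_nonpos (by linarith)]
      linarith
    have := hT t hTt
    rwa [Real.dist_eq, sub_zero, abs_div, abs_abs]
end

section
/- If in addition ω(s)/s → 0 as s → +∞, then (1/t) ∫_0^t z(s) ds → 0 both as t → +∞ and as t → −∞. -/
open MeasureTheory Filter Set Real intervalIntegral

/-- `exp s * |s| ≤ exp (s/2)` for `s ≤ 0`. -/
lemma ou_exp_mul_abs_le {s : ℝ} (hs : s ≤ 0) : Real.exp s * |s| ≤ Real.exp (s / 2) := by
  rw [abs_of_nonpos hs]
  have h1 : -(s / 4) + 1 ≤ Real.exp (-(s / 4)) := by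
    have := Real.add_one_le_exp (-(s / 4)); linarith
  have h2 : Real.exp (-(s / 2)) = Real.exp (-(s / 4)) * Real.exp (-(s / 4)) := by
    rw [← Real.exp_add]; ring_nf
  have h3 : -s ≤ Real.exp (-(s / 2)) := by nlinarith [sq_nonneg (s / 4 + 1), Real.exp_pos (-(s / 4))]
  have h4 : Real.exp s * Real.exp (-(s / 2)) = Real.exp (s / 2) := by
    rw [← Real.exp_add]; ring_nf
  nlinarith [Real.exp_pos s]

lemma ou_integrableOn_exp_half : IntegrableOn (fun s => Real.exp (s / 2)) (Iic (0:ℝ)) := by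
  have hc : Continuous fun s : ℝ => Real.exp (s / 2) :=
    Real.continuous_exp.comp (continuous_id.div_const 2)
  refine integrableOn_Iic_of_intervalIntegral_norm_bounded 2 0
    (fun y : ℝ => (hc.intervalIntegrable y 0).1) tendsto_id ?_
  filter_upwards with y
  have h1 : ∀ x : ℝ, ‖Real.exp (x / 2)‖ = Real.exp (x / 2) := fun x => by
    rw [Real.norm_eq_abs, abs_of_pos (Real.exp_pos _)]
  simp_rw [h1]
  rw [integral_comp_div Real.exp two_ne_zero, integral_exp]
  simp only [smul_eq_mul, zero_div, Real.exp_zero]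
  nlinarith [Real.exp_pos (y / 2)]

lemma ou_integrableOn_exp_abs : IntegrableOn (fun s => Real.exp s * |s|) (Iic (0:ℝ)) := by
  refine Integrable.mono' ou_integrableOn_exp_half
    ((continuous_exp.mul continuous_abs).aestronglyMeasurable) ?_
  filter_upwards [ae_restrict_mem measurableSet_Iic] with s hs
  rw [Real.norm_eq_abs, abs_of_nonneg (by positivity)]
  exact ou_exp_mul_abs_le hs

/-- Integrability of `exp u * f u` on `Iic t` for `f` with linear growth. -/
lemma ou_integrableOn_exp_mul (f : ℝ → ℝ) (hf : Continuous f) (C : ℝ)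
    (hC : ∀ u, |f u| ≤ |u| + C) (t : ℝ) :
    IntegrableOn (fun u => Real.exp u * f u) (Iic t) := by
  have hC0 : 0 ≤ C := by
    have h := hC 0
    rw [abs_zero, zero_add] at h
    linarith [abs_nonneg (f 0)]
  have h0 : IntegrableOn (fun u => Real.exp u * f u) (Iic (0:ℝ)) := by
    refine Integrable.mono' (g := fun u => Real.exp (u / 2) + C * Real.exp u)
      (ou_integrableOn_exp_half.add ((integrableOn_exp_Iic 0).const_mul C))
      ((continuous_exp.mul hf).aestronglyMeasurable) ?_
    filter_upwards [ae_restrict_mem measurableSet_Iic] with u hu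
    have h1 : |f u| ≤ |u| + C := hC u
    have h2 : Real.exp u * |u| ≤ Real.exp (u / 2) := ou_exp_mul_abs_le hu
    have h3 : (0:ℝ) < Real.exp u := Real.exp_pos u
    rw [Real.norm_eq_abs, abs_mul, abs_of_pos h3]
    nlinarith
  rcases le_or_gt t 0 with ht | ht
  · exact h0.mono_set (Iic_subset_Iic.2 ht)
  · have h1 : IntegrableOn (fun u => Real.exp u * f u) (Icc 0 t) :=
      (continuous_exp.mul hf).continuousOn.integrableOn_compact isCompact_Icc
    refine (h0.union h1).mono_set ?_
    intro x hx
    rcases le_or_gt x 0 with h | h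
    · exact Or.inl h
    · exact Or.inr ⟨h.le, hx⟩

/-- Sublinearity in the ε-C form. -/
lemma ou_sublinear_bound (ω : ℝ → ℝ) (hωcont : Continuous ω)
    (hsub_bot : Tendsto (fun s => ω s / s) atBot (nhds 0))
    (hsub_top : Tendsto (fun s => ω s / s) atTop (nhds 0))
    {ε : ℝ} (hε : 0 < ε) : ∃ C, 0 ≤ C ∧ ∀ u, |ω u| ≤ ε * |u| + C := by
  have hb := (Metric.tendsto_nhds.1 hsub_bot) ε hε
  have ht := (Metric.tendsto_nhds.1 hsub_top) ε hε
  obtain ⟨M₁, hM₁⟩ := eventually_atBot.1 hb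
  obtain ⟨M₂, hM₂⟩ := eventually_atTop.1 ht
  set A := min M₁ (-1) with hA
  set B := max M₂ (1:ℝ) with hB
  have hAB : A ≤ B := le_trans (le_trans (min_le_right _ _) (by norm_num)) (le_max_right _ _)
  obtain ⟨K, hK⟩ := (isCompact_Icc (a := A) (b := B)).exists_bound_of_continuousOn
    hωcont.continuousOn
  have h0mem : (0:ℝ) ∈ Icc A B :=
    ⟨le_trans (min_le_right _ _) (by norm_num), le_trans (by norm_num) (le_max_right _ _)⟩
  have hK0 : 0 ≤ K := le_trans (norm_nonneg _) (hK 0 h0mem)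
  refine ⟨K, hK0, fun u => ?_⟩
  rcases le_or_gt u A with h | h
  · have hu1 : u ≤ M₁ := le_trans h (min_le_left _ _)
    have hu0 : u < 0 := lt_of_le_of_lt (le_trans h (min_le_right _ _)) (by norm_num)
    have := hM₁ u hu1
    rw [Real.dist_eq, sub_zero, abs_div] at this
    have habs : |u| > 0 := abs_pos.2 (ne_of_lt hu0)
    have : |ω u| < ε * |u| := by
      rw [div_lt_iff₀ habs] at this; linarith
    linarith
  · rcases le_or_gt u B with h2 | h2
    · have h3 := hK u ⟨h.le, h2⟩
      rw [Real.norm_eq_abs] at h3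
      have h4 : (0:ℝ) ≤ ε * |u| := by positivity
      linarith
    · have hu1 : M₂ ≤ u := le_trans (le_max_left _ _) h2.le
      have hu0 : 0 < u := lt_of_lt_of_le (by norm_num) (le_trans (le_max_right M₂ 1) h2.le)
      have := hM₂ u hu1
      rw [Real.dist_eq, sub_zero, abs_div] at this
      have habs : |u| > 0 := abs_pos.2 (ne_of_gt hu0)
      have : |ω u| < ε * |u| := by
        rw [div_lt_iff₀ habs] at this; linarith
      linarith

/-- Translation of set integrals over `Iic`. -/
lemma ou_setIntegral_comp_add_right (g : ℝ → ℝ) (t : ℝ) :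
    ∫ s in Iic (0:ℝ), g (s + t) = ∫ u in Iic t, g u := by
  have h := (measurePreserving_add_right (volume : Measure ℝ) t).setIntegral_preimage_emb
    (measurableEmbedding_addRight t) g (Iic t)
  rwa [preimage_add_const_Iic, sub_self] at h

/-- From a sublinear bound on a function, its time-average of `f t / t` tends to `0`. -/
lemma ou_tendsto_div_of_bound (G : ℝ → ℝ)
    (h : ∀ ε > (0:ℝ), ∃ C, 0 ≤ C ∧ ∀ t, |G t| ≤ ε * |t| + C) :
    Tendsto (fun t => G t / t) atTop (nhds 0) ∧ Tendsto (fun t => G t / t) atBot (nhds 0) := by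
  constructor
  · rw [Metric.tendsto_nhds]
    intro δ hδ
    obtain ⟨C, hC0, hC⟩ := h (δ / 4) (by linarith)
    filter_upwards [eventually_ge_atTop (max 1 (4 * C / δ))] with t ht
    have ht1 : (1:ℝ) ≤ t := le_trans (le_max_left _ _) ht
    have ht0 : (0:ℝ) < t := by linarith
    have htC : 4 * C / δ ≤ t := le_trans (le_max_right _ _) ht
    have h4 : 4 * C ≤ t * δ := (div_le_iff₀ hδ).1 htC
    have hGb : |G t| ≤ δ / 4 * t + C := by have := hC t; rwa [abs_of_pos ht0] at this
    rw [Real.dist_eq, sub_zero, abs_div, abs_of_pos ht0, div_lt_iff₀ ht0]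
    nlinarith
  · rw [Metric.tendsto_nhds]
    intro δ hδ
    obtain ⟨C, hC0, hC⟩ := h (δ / 4) (by linarith)
    filter_upwards [eventually_le_atBot (min (-1) (-(4 * C / δ)))] with t ht
    have ht1 : t ≤ -1 := le_trans ht (min_le_left _ _)
    have ht0 : t < 0 := by linarith
    have htC : t ≤ -(4 * C / δ) := le_trans ht (min_le_right _ _)
    have h4 : 4 * C ≤ -t * δ := by
      have : 4 * C / δ ≤ -t := by linarith
      calc 4 * C = 4 * C / δ * δ := by field_simp
        _ ≤ -t * δ := by nlinarith
    have hGb : |G t| ≤ δ / 4 * (-t) + C := by have := hC t; rwa [abs_of_neg ht0] at this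
    rw [Real.dist_eq, sub_zero, abs_div, abs_of_neg ht0, div_lt_iff₀ (by linarith : (0:ℝ) < -t)]
    nlinarith

/-- For the pathwise stationary Ornstein–Uhlenbeck process
`z t = σ ∫_{−∞}^0 e^s (ω (s+t) − ω t) ds` driven by a continuous path `ω` with `ω 0 = 0`
that is sublinear at both `−∞` and `+∞`, the time averages satisfy
`(1/t) ∫_0^t z(s) ds → 0` as `t → ±∞`. -/
theorem ou_average_sublinear
    (σ : ℝ) (ω : ℝ → ℝ) (hωcont : Continuous ω) (hω0 : ω 0 = 0)
    (hsub_bot : Filter.Tendsto (fun s => ω s / s) Filter.atBot (nhds 0))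
    (hsub_top : Filter.Tendsto (fun s => ω s / s) Filter.atTop (nhds 0))
    (z : ℝ → ℝ)
    (hz : ∀ t : ℝ, z t = σ * ∫ s in Set.Iic (0:ℝ), Real.exp s * (ω (s + t) - ω t)) :
    Filter.Tendsto (fun t => (∫ s in (0:ℝ)..t, z s) / t) Filter.atTop (nhds 0) ∧
    Filter.Tendsto (fun t => (∫ s in (0:ℝ)..t, z s) / t) Filter.atBot (nhds 0) := by
  -- linear growth bound with ε = 1
  obtain ⟨C₁, hC₁0, hC₁⟩ := ou_sublinear_bound ω hωcont hsub_bot hsub_top (ε := 1) one_pos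
  simp only [one_mul] at hC₁
  -- the key auxiliary function G
  set G : ℝ → ℝ := fun t => ∫ s in Iic (0:ℝ), Real.exp s * ω (s + t) with hGdef
  -- integrability of the G-integrand
  have hGint : ∀ t : ℝ, IntegrableOn (fun s => Real.exp s * ω (s + t)) (Iic (0:ℝ)) := by
    intro t
    refine ou_integrableOn_exp_mul (fun s => ω (s + t))
      (hωcont.comp (continuous_id.add continuous_const)) (|t| + C₁) (fun u => ?_) 0
    calc |ω (u + t)| ≤ |u + t| + C₁ := hC₁ (u + t)
      _ ≤ |u| + (|t| + C₁) := by have := abs_add_le u t; linarith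
  -- z t = σ * (G t - ω t)
  have hzG : ∀ t, z t = σ * (G t - ω t) := by
    intro t
    rw [hz t]
    congr 1
    have heq : ∀ s : ℝ, Real.exp s * (ω (s + t) - ω t)
        = Real.exp s * ω (s + t) - Real.exp s * ω t := fun s => by ring
    rw [show (fun s => Real.exp s * (ω (s + t) - ω t))
        = fun s => Real.exp s * ω (s + t) - Real.exp s * ω t from funext heq] at *
    rw [integral_sub (hGint t) ((integrableOn_exp_Iic 0).mul_const (ω t)),
      MeasureTheory.integral_mul_const, integral_exp_Iic_zero, one_mul]
  -- translation : G t = exp (-t) * F t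
  set F : ℝ → ℝ := fun t => ∫ u in Iic t, Real.exp u * ω u with hFdef
  have hFint : ∀ t, IntegrableOn (fun u => Real.exp u * ω u) (Iic t) :=
    ou_integrableOn_exp_mul ω hωcont C₁ (fun u => by linarith [hC₁ u]) 
  have hGF : ∀ t, G t = Real.exp (-t) * F t := by
    intro t
    have h1 : G t = ∫ s in Iic (0:ℝ), (fun u => Real.exp (u - t) * ω u) (s + t) := by
      rw [hGdef]
      refine integral_congr_ae (Eventually.of_forall fun s => ?_)
      simp [add_sub_cancel_right]
    rw [h1, ou_setIntegral_comp_add_right (fun u => Real.exp (u - t) * ω u) t]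
    have h2 : ∀ u : ℝ, Real.exp (u - t) * ω u = Real.exp (-t) * (Real.exp u * ω u) := by
      intro u
      rw [sub_eq_add_neg, Real.exp_add]
      ring
    rw [show (fun u => Real.exp (u - t) * ω u)
        = fun u => Real.exp (-t) * (Real.exp u * ω u) from funext h2]
    rw [MeasureTheory.integral_const_mul]
  -- F t = F 0 + ∫ 0..t
  set H : ℝ → ℝ := fun t => ∫ u in (0:ℝ)..t, Real.exp u * ω u with hHdef
  have hFH : ∀ t, F t = F 0 + H t := by
    intro t
    have := integral_Iic_sub_Iic (hFint 0) (hFint t)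
    rw [hHdef]
    dsimp only
    linarith [this]
  have hHderiv : ∀ t, HasDerivAt H (Real.exp t * ω t) t := by
    intro t
    exact intervalIntegral.integral_hasDerivAt_right
      ((continuous_exp.mul hωcont).intervalIntegrable _ _)
      ((continuous_exp.mul hωcont).stronglyMeasurable.stronglyMeasurableAtFilter)
      (continuous_exp.mul hωcont).continuousAt
  -- G has derivative -G t + ω t
  have hGderiv : ∀ t, HasDerivAt G (-G t + ω t) t := by
    intro t
    have hGfun : G = fun t => Real.exp (-t) * (F 0 + H t) := by
      funext t; rw [hGF t, hFH t]
    have h1 : HasDerivAt (fun t : ℝ => Real.exp (-t)) (Real.exp (-t) * (-1)) t :=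
      (hasDerivAt_neg t).exp
    have h2 : HasDerivAt (fun t => F 0 + H t) (Real.exp t * ω t) t :=
      (hHderiv t).const_add (F 0)
    have h3 := h1.mul h2
    rw [hGfun]
    refine (show HasDerivAt (fun t => Real.exp (-t) * (F 0 + H t)) _ t from h3).congr_deriv ?_
    symm
    have hee : Real.exp (-t) * Real.exp t = 1 := by
      rw [← Real.exp_add]; simp
    show -(Real.exp (-t) * (F 0 + H t)) + ω t
        = Real.exp (-t) * (-1) * (F 0 + H t) + Real.exp (-t) * (Real.exp t * ω t)
    have h5 : Real.exp (-t) * (Real.exp t * ω t) = ω t := by rw [← mul_assoc, hee, one_mul]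
    rw [h5]; ring
  have hGcont : Continuous G := continuous_iff_continuousAt.2 fun t =>
    (hGderiv t).continuousAt
  -- key identity for the integral of z
  have hkey : ∀ t : ℝ, (∫ s in (0:ℝ)..t, z s) = -σ * G t - (-σ * G 0) := by
    intro t
    have hzfun : ∀ s ∈ Set.uIcc (0:ℝ) t, HasDerivAt (fun s => -σ * G s) (z s) s := by
      intro s _
      have := ((hGderiv s).const_mul (-σ))
      exact this.congr_deriv (by rw [hzG s]; ring)
    have hint : IntervalIntegrable z volume 0 t := by
      have hzc : Continuous z := by
        rw [show z = fun s => σ * (G s - ω s) from funext hzG]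
        exact continuous_const.mul (hGcont.sub hωcont)
      exact hzc.intervalIntegrable _ _
    exact intervalIntegral.integral_eq_sub_of_hasDerivAt hzfun hint
  -- sublinear bound on G
  have hGbound : ∀ ε > (0:ℝ), ∃ C, 0 ≤ C ∧ ∀ t, |G t| ≤ ε * |t| + C := by
    intro ε hε
    obtain ⟨C, hC0, hC⟩ := ou_sublinear_bound ω hωcont hsub_bot hsub_top hε
    set I : ℝ := ∫ s in Iic (0:ℝ), Real.exp s * |s| with hIdef
    have hI0 : 0 ≤ I := setIntegral_nonneg measurableSet_Iic fun s _ => by positivity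
    refine ⟨ε * I + C, by positivity, fun t => ?_⟩
    have h1 : |G t| ≤ ∫ s in Iic (0:ℝ), ‖Real.exp s * ω (s + t)‖ :=
      calc |G t| = ‖∫ s in Iic (0:ℝ), Real.exp s * ω (s + t)‖ := (Real.norm_eq_abs _).symm
        _ ≤ _ := MeasureTheory.norm_integral_le_integral_norm _
    have h2 : (∫ s in Iic (0:ℝ), ‖Real.exp s * ω (s + t)‖)
        ≤ ∫ s in Iic (0:ℝ), (ε * (Real.exp s * |s|) + (ε * |t| + C) * Real.exp s) := by
      refine integral_mono ((hGint t).norm) ?_ ?_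
      · exact (ou_integrableOn_exp_abs.const_mul ε).add
          ((integrableOn_exp_Iic 0).const_mul (ε * |t| + C))
      · intro s
        have hc := hC (s + t)
        have habs : |s + t| ≤ |s| + |t| := abs_add_le s t
        have he : (0:ℝ) < Real.exp s := Real.exp_pos s
        simp only [norm_mul, Real.norm_eq_abs, abs_of_pos he]
        have b1 : Real.exp s * |ω (s + t)| ≤ Real.exp s * (ε * |s + t| + C) :=
          mul_le_mul_of_nonneg_left hc he.le
        have b2 : ε * |s + t| ≤ ε * (|s| + |t|) := mul_le_mul_of_nonneg_left habs hε.le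
        nlinarith [mul_le_mul_of_nonneg_left b2 he.le]
    have h3 : (∫ s in Iic (0:ℝ), (ε * (Real.exp s * |s|) + (ε * |t| + C) * Real.exp s))
        = ε * I + (ε * |t| + C) := by
      rw [integral_add (ou_integrableOn_exp_abs.const_mul ε)
        ((integrableOn_exp_Iic 0).const_mul (ε * |t| + C)),
        MeasureTheory.integral_const_mul, MeasureTheory.integral_const_mul, integral_exp_Iic_zero, mul_one, hIdef]
    calc |G t| ≤ ε * I + (ε * |t| + C) := by linarith
      _ = ε * |t| + (ε * I + C) := by ring
  -- conclude
  apply ou_tendsto_div_of_bound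
  intro ε hε
  have hε' : 0 < ε / (|σ| + 1) := by positivity
  obtain ⟨C, hC0, hC⟩ := hGbound (ε / (|σ| + 1)) hε'
  refine ⟨|σ| * |G 0| + |σ| * C, by positivity, fun t => ?_⟩
  have h1 : |∫ s in (0:ℝ)..t, z s| ≤ |σ| * |G t| + |σ| * |G 0| := by
    rw [hkey t]
    calc |(-σ) * G t - (-σ) * G 0| ≤ |(-σ) * G t| + |(-σ) * G 0| := abs_sub _ _
      _ = |σ| * |G t| + |σ| * |G 0| := by rw [abs_mul, abs_mul, abs_neg]
  have h2 : |σ| * |G t| ≤ |σ| * (ε / (|σ| + 1) * |t| + C) :=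
    mul_le_mul_of_nonneg_left (hC t) (abs_nonneg σ)
  have h3 : |σ| * (ε / (|σ| + 1)) ≤ ε := by
    rw [mul_div_assoc']
    rw [div_le_iff₀ (by positivity : (0:ℝ) < |σ| + 1)]
    nlinarith [abs_nonneg σ]
  nlinarith [abs_nonneg t, abs_nonneg σ, abs_nonneg (G t)]
end

section
/- Let η > 0 and let ν, σ ∈ ℝ satisfy σ ≠ 0, |ν| ≤ |σ| and |ν| + |σ| < η/2. Then there is a constant C > 0 depending only on η such that: for every K ≥ 0 and every continuous function ω : (−∞, 0] → ℝ with |ω(τ)| ≤ K + |τ| for all τ ≤ 0, one has sup_{τ ≤ 0} |1 − e^{ν τ + σ ω(τ)}| / ( |σ| e^{η |τ|} ) ≤ C e^{|σ| K} ( 1 + K ). -/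
/-- `|1 - e^x| ≤ |x| e^{|x|}` for all real `x`. -/
lemma abs_one_sub_exp_le (x : ℝ) : |1 - Real.exp x| ≤ |x| * Real.exp |x| := by
  rcases le_or_gt x 0 with hx | hx
  · have h1 : Real.exp x ≤ 1 := Real.exp_le_one_iff.mpr hx
    have h2 : x + 1 ≤ Real.exp x := Real.add_one_le_exp x
    have h3 : (1:ℝ) ≤ Real.exp |x| := Real.one_le_exp (abs_nonneg x)
    rw [abs_of_nonneg (by linarith), abs_of_nonpos hx]
    nlinarith [Real.one_le_exp (neg_nonneg.mpr hx), neg_nonneg.mpr hx]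
  · have h1 : (1:ℝ) ≤ Real.exp x := Real.one_le_exp hx.le
    have h2 : -x + 1 ≤ Real.exp (-x) := Real.add_one_le_exp (-x)
    have h3 : Real.exp (-x) * Real.exp x = 1 := by
      rw [← Real.exp_add]; simp
    rw [abs_of_nonpos (by linarith), abs_of_pos hx]
    nlinarith [Real.exp_pos x]

/-- (Deterministic content of Lemma 4.5.)  Let `η > 0` and
`ν, σ ∈ ℝ` with `σ ≠ 0`, `|ν| ≤ |σ|` and `|ν| + |σ| < η/2`.  Then there is a constant
`C > 0` depending only on `η` such that for every `K ≥ 0` and every continuous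
`ω : (−∞,0] → ℝ` with `|ω τ| ≤ K + |τ|` for all `τ ≤ 0`,
`sup_{τ ≤ 0} |1 − e^{ντ + σ ω τ}| / (|σ| e^{η|τ|}) ≤ C e^{|σ|K} (1 + K)`. -/
theorem K2_bound (η : ℝ) (hη : 0 < η) :
    ∃ C : ℝ, 0 < C ∧
      ∀ ν σ : ℝ, σ ≠ 0 → |ν| ≤ |σ| → |ν| + |σ| < η / 2 →
        ∀ K : ℝ, 0 ≤ K →
          ∀ ω : ℝ → ℝ, ContinuousOn ω (Set.Iic 0) →
            (∀ τ ≤ (0:ℝ), |ω τ| ≤ K + |τ|) →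
            ∀ τ ≤ (0:ℝ),
              |1 - Real.exp (ν * τ + σ * ω τ)| / (|σ| * Real.exp (η * |τ|))
                ≤ C * Real.exp (|σ| * K) * (1 + K) := by
  refine ⟨1 + 4 / η, by positivity, ?_⟩
  intro ν σ hσ hνσ hsum K hK ω hωc hωb τ hτ
  set x := ν * τ + σ * ω τ with hx
  have hσpos : 0 < |σ| := abs_pos.mpr hσ
  have hν0 : 0 ≤ |ν| := abs_nonneg ν
  have hτ0 : 0 ≤ |τ| := abs_nonneg τ
  have hωτ : |ω τ| ≤ K + |τ| := hωb τ hτ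
  have hω0 : 0 ≤ |ω τ| := abs_nonneg _
  -- bound on |x|
  have hxb : |x| ≤ |σ| * K + (η / 2) * |τ| := by
    have h1 : |x| ≤ |ν| * |τ| + |σ| * |ω τ| := by
      calc |x| ≤ |ν * τ| + |σ * ω τ| := abs_add_le _ _
        _ = |ν| * |τ| + |σ| * |ω τ| := by rw [abs_mul, abs_mul]
    have h2 : |σ| * |ω τ| ≤ |σ| * (K + |τ|) :=
      mul_le_mul_of_nonneg_left hωτ hσpos.le
    nlinarith
  have hxb2 : |x| ≤ |σ| * (K + 2 * |τ|) := by
    have h1 : |x| ≤ |ν| * |τ| + |σ| * |ω τ| := by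
      calc |x| ≤ |ν * τ| + |σ * ω τ| := abs_add_le _ _
        _ = |ν| * |τ| + |σ| * |ω τ| := by rw [abs_mul, abs_mul]
    nlinarith [mul_le_mul_of_nonneg_left hωτ hσpos.le,
      mul_le_mul_of_nonneg_right hνσ hτ0]
  have key : |1 - Real.exp x| ≤ |x| * Real.exp |x| := abs_one_sub_exp_le x
  -- pass to the division form
  rw [div_le_iff₀ (by positivity)]
  have hexp1 : Real.exp |x| ≤ Real.exp (|σ| * K) * Real.exp ((η / 2) * |τ|) := by
    rw [← Real.exp_add]
    exact Real.exp_le_exp.mpr hxb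
  have step1 : |1 - Real.exp x|
      ≤ (|σ| * (K + 2 * |τ|)) * (Real.exp (|σ| * K) * Real.exp ((η / 2) * |τ|)) := by
    calc |1 - Real.exp x| ≤ |x| * Real.exp |x| := key
      _ ≤ (|σ| * (K + 2 * |τ|)) * (Real.exp (|σ| * K) * Real.exp ((η / 2) * |τ|)) := by
          apply mul_le_mul hxb2 hexp1 (Real.exp_pos _).le (by positivity)
  refine step1.trans ?_
  -- remaining: (|σ|(K+2|τ|)) e^{|σ|K} e^{(η/2)|τ|} ≤ (1+4/η) e^{|σ|K} (1+K) |σ| e^{η|τ|}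
  have hexp2 : Real.exp (η * |τ|) = Real.exp ((η / 2) * |τ|) * Real.exp ((η / 2) * |τ|) := by
    rw [← Real.exp_add]; ring_nf
  rw [hexp2]
  have hs : (η / 2) * |τ| + 1 ≤ Real.exp ((η / 2) * |τ|) := Real.add_one_le_exp _
  have he1 : (1:ℝ) ≤ Real.exp ((η / 2) * |τ|) := Real.one_le_exp (by positivity)
  -- key scalar inequality: K + 2|τ| ≤ (1+4/η)(1+K) e^{(η/2)|τ|}
  have hkey : K + 2 * |τ| ≤ (1 + 4 / η) * (1 + K) * Real.exp ((η / 2) * |τ|) := by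
    have h2τ : 2 * |τ| ≤ (4 / η) * Real.exp ((η / 2) * |τ|) := by
      rw [div_mul_eq_mul_div, le_div_iff₀ hη]
      nlinarith
    have hKe : K ≤ K * Real.exp ((η / 2) * |τ|) := le_mul_of_one_le_right hK he1
    nlinarith [Real.exp_pos ((η / 2) * |τ|)]
  calc |σ| * (K + 2 * |τ|) * (Real.exp (|σ| * K) * Real.exp ((η / 2) * |τ|))
      ≤ |σ| * ((1 + 4 / η) * (1 + K) * Real.exp ((η / 2) * |τ|))
          * (Real.exp (|σ| * K) * Real.exp ((η / 2) * |τ|)) := by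
        gcongr
    _ = (1 + 4 / η) * Real.exp (|σ| * K) * (1 + K)
          * (|σ| * (Real.exp ((η / 2) * |τ|) * Real.exp ((η / 2) * |τ|))) := by ring
end

section
/- Let H be a normed space, let η, ν ∈ ℝ with η + ν > 0, let z : (−∞,0] → ℝ be continuous, and let f : (−∞,0] → H be continuous with ‖f(τ)‖ ≤ M e^{−ητ + ∫_0^τ z(r) dr} for all τ ≤ 0. Then for every t ≤ 0, ‖ ∫_t^0 e^{ν(t−τ) + ∫_τ^t z(r) dr} f(τ) dτ ‖ ≤ ( M / (η + ν) ) e^{−ηt + ∫_0^t z(r) dr}. -/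
private lemma zInt {z : ℝ → ℝ} (hz : ContinuousOn z (Set.Iic 0)) {a b : ℝ}
    (ha : a ≤ 0) (hb : b ≤ 0) : IntervalIntegrable z MeasureTheory.volume a b :=
  (hz.mono fun x hx => le_trans hx.2 (max_le ha hb)).intervalIntegrable

/-- (Weighted convolution estimate for the `H_c`-component of the
Lyapunov–Perron operator.)  Let `H` be a Banach space, `η + ν > 0`, `z : (−∞,0] → ℝ`
continuous, and `f : (−∞,0] → H` continuous with
`‖f τ‖ ≤ M e^{−ητ + ∫_0^τ z(r) dr}` for all `τ ≤ 0`.  Then for every `t ≤ 0`,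
`‖∫_t^0 e^{ν(t−τ) + ∫_τ^t z(r) dr} f(τ) dτ‖ ≤ (M/(η+ν)) e^{−ηt + ∫_0^t z(r) dr}`. -/
theorem weighted_convolution_center
    {H : Type*} [NormedAddCommGroup H] [NormedSpace ℝ H] [CompleteSpace H]
    (η ν : ℝ) (hην : 0 < η + ν)
    (z : ℝ → ℝ) (hz : ContinuousOn z (Set.Iic 0))
    (f : ℝ → H) (hf : ContinuousOn f (Set.Iic 0))
    (M : ℝ)
    (hbd : ∀ τ ≤ (0:ℝ), ‖f τ‖ ≤ M * Real.exp (-η * τ + ∫ r in (0:ℝ)..τ, z r)) :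
    ∀ t ≤ (0:ℝ),
      ‖∫ τ in t..(0:ℝ), Real.exp (ν * (t - τ) + ∫ r in τ..t, z r) • f τ‖
        ≤ (M / (η + ν)) * Real.exp (-η * t + ∫ r in (0:ℝ)..t, z r) := by
  intro t ht
  have hM : 0 ≤ M := by
    have h0 := hbd 0 le_rfl
    simp at h0
    exact le_trans (norm_nonneg _) h0
  set C : ℝ := ∫ r in (0:ℝ)..t, z r with hC
  set g : ℝ → ℝ := fun τ => M * Real.exp (ν * t + C) * Real.exp (-(η + ν) * τ) with hg
  have hgint : IntervalIntegrable g MeasureTheory.volume t 0 :=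
    (Continuous.intervalIntegrable (by fun_prop) _ _)
  have hkey : ‖∫ τ in t..(0:ℝ), Real.exp (ν * (t - τ) + ∫ r in τ..t, z r) • f τ‖
      ≤ |∫ τ in t..(0:ℝ), g τ| := by
    apply intervalIntegral.norm_integral_le_abs_of_norm_le _ hgint
    rw [MeasureTheory.ae_restrict_iff' measurableSet_uIoc]
    refine Filter.Eventually.of_forall fun τ hτ => ?_
    rw [Set.uIoc_of_le ht] at hτ
    have hτ0 : τ ≤ 0 := hτ.2
    have htτ : t ≤ τ := le_of_lt hτ.1
    have hsplit : (∫ r in (0:ℝ)..τ, z r) + (∫ r in τ..t, z r) = C := by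
      rw [hC]
      exact intervalIntegral.integral_add_adjacent_intervals
        (zInt hz le_rfl hτ0) (zInt hz hτ0 ht)
    rw [norm_smul, Real.norm_eq_abs, abs_of_pos (Real.exp_pos _)]
    calc Real.exp (ν * (t - τ) + ∫ r in τ..t, z r) * ‖f τ‖
        ≤ Real.exp (ν * (t - τ) + ∫ r in τ..t, z r) *
            (M * Real.exp (-η * τ + ∫ r in (0:ℝ)..τ, z r)) :=
          mul_le_mul_of_nonneg_left (hbd τ hτ0) (le_of_lt (Real.exp_pos _))
      _ = g τ := by
          have hsum : (ν * (t - τ) + ∫ r in τ..t, z r) + (-η * τ + ∫ r in (0:ℝ)..τ, z r)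
              = (ν * t + C) + (-(η + ν) * τ) := by linarith [hsplit]
          have hE : Real.exp (ν * (t - τ) + ∫ r in τ..t, z r) *
                Real.exp (-η * τ + ∫ r in (0:ℝ)..τ, z r)
              = Real.exp (ν * t + C) * Real.exp (-(η + ν) * τ) := by
            rw [← Real.exp_add, ← Real.exp_add, hsum]
          rw [hg]
          linear_combination M * hE
  refine hkey.trans ?_
  have hne : (η + ν) ≠ 0 := ne_of_gt hην
  have hint : (∫ τ in t..(0:ℝ), Real.exp (-(η + ν) * τ))
      = (Real.exp (-(η + ν) * t) - 1) / (η + ν) := by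
    have h1 : ∀ τ : ℝ, HasDerivAt (fun x => Real.exp (-(η + ν) * x) / (-(η + ν)))
        (Real.exp (-(η + ν) * τ)) τ := by
      intro τ
      have h2 : HasDerivAt (fun x : ℝ => -(η + ν) * x) (-(η + ν)) τ := by
        simpa using (hasDerivAt_id τ).const_mul (-(η + ν))
      have h3 := ((Real.hasDerivAt_exp (-(η + ν) * τ)).comp τ h2).div_const (-(η + ν))
      have h4 : Real.exp (-(η + ν) * τ) * -(η + ν) / -(η + ν) = Real.exp (-(η + ν) * τ) :=
        mul_div_cancel_right₀ _ (neg_ne_zero.mpr hne)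
      rwa [h4] at h3
    rw [intervalIntegral.integral_eq_sub_of_hasDerivAt (fun τ _ => h1 τ)
      (Continuous.intervalIntegrable (by fun_prop) _ _)]
    rw [mul_zero, Real.exp_zero, div_sub_div_same, div_neg, ← neg_div, neg_sub]
  have hgval : (∫ τ in t..(0:ℝ), g τ)
      = M * Real.exp (ν * t + C) * ((Real.exp (-(η + ν) * t) - 1) / (η + ν)) := by
    rw [hg, intervalIntegral.integral_const_mul, hint]
  rw [hgval]
  have h1le : (1:ℝ) ≤ Real.exp (-(η + ν) * t) :=
    Real.one_le_exp (by nlinarith)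
  have hxpos : 0 ≤ M * Real.exp (ν * t + C) * ((Real.exp (-(η + ν) * t) - 1) / (η + ν)) := by
    apply mul_nonneg (mul_nonneg hM (le_of_lt (Real.exp_pos _)))
    apply div_nonneg (by linarith) (le_of_lt hην)
  rw [abs_of_nonneg hxpos]
  have hexp : Real.exp (ν * t + C) * Real.exp (-(η + ν) * t) = Real.exp (-η * t + C) := by
    rw [← Real.exp_add]; ring_nf
  calc M * Real.exp (ν * t + C) * ((Real.exp (-(η + ν) * t) - 1) / (η + ν))
      ≤ M * Real.exp (ν * t + C) * (Real.exp (-(η + ν) * t) / (η + ν)) := by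
        apply mul_le_mul_of_nonneg_left _ (mul_nonneg hM (le_of_lt (Real.exp_pos _)))
        gcongr
        linarith
    _ = (M / (η + ν)) * Real.exp (-η * t + C) := by
        rw [← hexp]; field_simp
end

section
/- Let Y and H be Banach spaces, α ∈ (0,1), M > 0, and η, ν, λ ∈ ℝ with λ > η + ν. Let S : (0,∞) → L(Y, H) be continuous in operator norm with ‖S(r)‖ ≤ M r^{−α} e^{−λ r} for all r > 0. Let z : (−∞,0] → ℝ be continuous and f : (−∞,0] → Y continuous with ‖f(τ)‖_Y ≤ N e^{−ητ + ∫_0^τ z(r) dr} for all τ ≤ 0. Then for every t ≤ 0 the Bochner integral ∫_{−∞}^t e^{ν(t−τ) + ∫_τ^t z(r) dr} S(t−τ)( f(τ) ) dτ converges absolutely in H and ‖ ∫_{−∞}^t e^{ν(t−τ) + ∫_τ^t z(r) dr} S(t−τ)( f(τ) ) dτ ‖ ≤ N M Γ(1−α) (λ − η − ν)^{α−1} e^{−ηt + ∫_0^t z(r) dr}, where Γ is the Gamma function. -/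
open MeasureTheory Set Real

/-- (Weighted smoothing convolution estimate for the `H_s`-component of
the Lyapunov–Perron operator.)  Let `Y`, `H` be Banach spaces, `α ∈ (0,1)`, `M > 0`,
`λ > η + ν`, and `S : (0,∞) → L(Y,H)` continuous in operator norm with
`‖S r‖ ≤ M r^{−α} e^{−λ r}`.  Let `z : (−∞,0] → ℝ` be continuous and `f : (−∞,0] → Y`
continuous with `‖f τ‖ ≤ N e^{−ητ + ∫_0^τ z(r) dr}`.  Then for every `t ≤ 0` the integral
`∫_{−∞}^t e^{ν(t−τ) + ∫_τ^t z(r) dr} S(t−τ)(f τ) dτ` converges absolutely in `H` and its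
norm is at most `N M Γ(1−α) (λ−η−ν)^{α−1} e^{−ηt + ∫_0^t z(r) dr}`. -/
theorem weighted_convolution_stable
    {Y H : Type*} [NormedAddCommGroup Y] [NormedSpace ℝ Y]
    [NormedAddCommGroup H] [NormedSpace ℝ H] [CompleteSpace H]
    (α M η ν lam : ℝ) (hα : α ∈ Set.Ioo (0:ℝ) 1) (hM : 0 < M) (hlam : η + ν < lam)
    (S : ℝ → Y →L[ℝ] H) (hScont : ContinuousOn S (Set.Ioi 0))
    (hS : ∀ r > (0:ℝ), ‖S r‖ ≤ M * r ^ (-α) * Real.exp (-lam * r))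
    (z : ℝ → ℝ) (hz : ContinuousOn z (Set.Iic 0))
    (f : ℝ → Y) (hf : ContinuousOn f (Set.Iic 0))
    (N : ℝ)
    (hbd : ∀ τ ≤ (0:ℝ), ‖f τ‖ ≤ N * Real.exp (-η * τ + ∫ r in (0:ℝ)..τ, z r)) :
    ∀ t ≤ (0:ℝ),
      MeasureTheory.IntegrableOn
        (fun τ => Real.exp (ν * (t - τ) + ∫ r in τ..t, z r) • (S (t - τ)) (f τ))
        (Set.Iic t) MeasureTheory.volume ∧
      ‖∫ τ in Set.Iic t, Real.exp (ν * (t - τ) + ∫ r in τ..t, z r) • (S (t - τ)) (f τ)‖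
        ≤ N * M * Real.Gamma (1 - α) * (lam - η - ν) ^ (α - 1)
            * Real.exp (-η * t + ∫ r in (0:ℝ)..t, z r) := by
  obtain ⟨hα0, hα1⟩ := hα
  intro t ht
  set c : ℝ := lam - η - ν with hc
  have hcpos : 0 < c := by simp only [hc]; linarith
  have hN : 0 ≤ N := by
    have h := hbd 0 le_rfl
    simpa using le_trans (norm_nonneg (f 0)) h
  -- interval integrability of z on subintervals of Iic 0
  have hzint : ∀ a b : ℝ, a ≤ 0 → b ≤ 0 → IntervalIntegrable z volume a b := by
    intro a b ha hb
    refine (hz.mono ?_).intervalIntegrable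
    intro x hx
    exact Set.mem_Iic.mpr (le_trans hx.2 (sup_le ha hb))
  -- the primitive of z
  have hsplit : ∀ τ ≤ (0:ℝ), (∫ r in τ..t, z r)
      = (∫ r in (0:ℝ)..t, z r) - (∫ r in (0:ℝ)..τ, z r) :=
    fun τ hτ =>
      (intervalIntegral.integral_interval_sub_left (hzint 0 t le_rfl ht) (hzint 0 τ le_rfl hτ)).symm
  have hFcont : ContinuousOn (fun τ => ∫ r in (0:ℝ)..τ, z r) (Set.Iic 0) := by
    intro τ₀ hτ₀
    have h_int : IntervalIntegrable z volume (min 0 (τ₀ - 1)) (max 0 0) := by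
      refine hzint _ _ (min_le_left _ _) (by simp)
    have h := intervalIntegral.continuousWithinAt_primitive (μ := volume) (a := 0)
      (b₀ := τ₀) (b₁ := τ₀ - 1) (b₂ := 0) (measure_singleton τ₀) h_int
    refine h.mono_of_mem_nhdsWithin ?_
    refine mem_nhdsWithin.mpr ⟨Set.Ioi (τ₀ - 1), isOpen_Ioi, by simp, ?_⟩
    intro x hx
    exact ⟨hx.1.le, hx.2⟩
  -- the comparison kernel
  set φ : ℝ → ℝ := fun s => s ^ (-α) * Real.exp (-(c * s)) with hφ
  have hφint : MeasureTheory.IntegrableOn φ (Set.Ioi 0) := by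
    have h := integrableOn_rpow_mul_exp_neg_mul_rpow (s := -α) (p := 1) (b := c)
      (by linarith) one_pos hcpos
    refine h.congr_fun (fun x _ => ?_) measurableSet_Ioi
    beta_reduce
    rw [Real.rpow_one, neg_mul]
  have hφval : ∫ s in Set.Ioi (0:ℝ), φ s = c ^ (α - 1) * Real.Gamma (1 - α) := by
    have h := Real.integral_rpow_mul_exp_neg_mul_Ioi (a := 1 - α) (r := c) (by linarith) hcpos
    rw [show (1:ℝ) - α - 1 = -α by ring] at h
    rw [hφ] at *
    rw [h, one_div, Real.inv_rpow hcpos.le, ← Real.rpow_neg hcpos.le,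
      (show -(1-α) = α - 1 by ring)]
  -- change of variables τ ↦ t - τ
  have hmp : MeasurePreserving (fun τ : ℝ => t - τ) volume volume :=
    Measure.measurePreserving_sub_left volume t
  have hemb : MeasurableEmbedding (fun τ : ℝ => t - τ) :=
    (MeasurableEquiv.subLeft t).measurableEmbedding
  have hpre : (fun τ : ℝ => t - τ) ⁻¹' (Set.Ioi 0) = Set.Iio t := by
    ext x; simp [sub_pos]
  have hBint : MeasureTheory.IntegrableOn (fun τ => φ (t - τ)) (Set.Iio t) := by
    have h := (hmp.integrableOn_comp_preimage hemb (f := φ) (s := Set.Ioi 0)).mpr hφint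
    rwa [hpre] at h
  have hBval : ∫ τ in Set.Iio t, φ (t - τ) = c ^ (α - 1) * Real.Gamma (1 - α) := by
    have h := hmp.setIntegral_preimage_emb hemb φ (Set.Ioi 0)
    rw [hpre] at h
    rw [h, hφval]
  -- pointwise bound
  set K : ℝ := N * M * Real.exp (-η * t + ∫ r in (0:ℝ)..t, z r) with hK
  have hKnn : 0 ≤ K := by positivity
  set g : ℝ → H := fun τ => Real.exp (ν * (t - τ) + ∫ r in τ..t, z r) • (S (t - τ)) (f τ)
    with hg
  have hbound : ∀ τ ∈ Set.Iio t, ‖g τ‖ ≤ K * φ (t - τ) := by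
    intro τ hτ
    have hτt : τ < t := hτ
    have hτ0 : τ ≤ 0 := le_trans hτt.le ht
    have hs' : 0 < t - τ := by linarith
    rw [hg, norm_smul, Real.norm_eq_abs, Real.abs_exp]
    calc Real.exp (ν * (t - τ) + ∫ r in τ..t, z r) * ‖(S (t - τ)) (f τ)‖
        ≤ Real.exp (ν * (t - τ) + ∫ r in τ..t, z r) *
            ((M * (t - τ) ^ (-α) * Real.exp (-lam * (t - τ))) *
              (N * Real.exp (-η * τ + ∫ r in (0:ℝ)..τ, z r))) := by
          refine mul_le_mul_of_nonneg_left ?_ (Real.exp_pos _).le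
          calc ‖(S (t - τ)) (f τ)‖ ≤ ‖S (t - τ)‖ * ‖f τ‖ :=
                ContinuousLinearMap.le_opNorm _ _
            _ ≤ (M * (t - τ) ^ (-α) * Real.exp (-lam * (t - τ))) *
                  (N * Real.exp (-η * τ + ∫ r in (0:ℝ)..τ, z r)) := by
                refine mul_le_mul (hS _ hs') (hbd τ hτ0) (norm_nonneg _) ?_
                positivity
      _ = K * φ (t - τ) := by
          rw [hsplit τ hτ0]
          have key : Real.exp (ν * (t - τ) + ((∫ r in (0:ℝ)..t, z r) - ∫ r in (0:ℝ)..τ, z r)) *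
              Real.exp (-lam * (t - τ)) * Real.exp (-η * τ + ∫ r in (0:ℝ)..τ, z r)
              = Real.exp (-η * t + ∫ r in (0:ℝ)..t, z r) * Real.exp (-(c * (t - τ))) := by
            rw [← Real.exp_add, ← Real.exp_add, ← Real.exp_add]
            congr 1
            simp only [hc]; ring
          calc Real.exp (ν * (t - τ) + ((∫ r in (0:ℝ)..t, z r) - ∫ r in (0:ℝ)..τ, z r)) *
              ((M * (t - τ) ^ (-α) * Real.exp (-lam * (t - τ))) *
                (N * Real.exp (-η * τ + ∫ r in (0:ℝ)..τ, z r)))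
              = N * M * (t - τ) ^ (-α) *
                (Real.exp (ν * (t - τ) + ((∫ r in (0:ℝ)..t, z r) - ∫ r in (0:ℝ)..τ, z r)) *
                  Real.exp (-lam * (t - τ)) *
                  Real.exp (-η * τ + ∫ r in (0:ℝ)..τ, z r)) := by ring
            _ = N * M * (t - τ) ^ (-α) *
                (Real.exp (-η * t + ∫ r in (0:ℝ)..t, z r) * Real.exp (-(c * (t - τ)))) := by
                rw [key]
            _ = K * φ (t - τ) := by rw [hK, hφ]; ring
  -- continuity, hence measurability, of g on Iio t
  have hIio : Set.Iio t ⊆ Set.Iic (0:ℝ) := fun x hx => le_trans (le_of_lt hx) ht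
  have hgcont : ContinuousOn g (Set.Iio t) := by
    rw [hg]
    apply ContinuousOn.smul
    · refine Real.continuous_exp.comp_continuousOn (ContinuousOn.add ?_ ?_)
      · exact (continuous_const.mul (continuous_const.sub continuous_id)).continuousOn
      · refine ContinuousOn.congr (((continuousOn_const (c := ∫ r in (0:ℝ)..t, z r)).sub hFcont).mono hIio) ?_
        intro x hx
        exact hsplit x (hIio hx)
    · refine ContinuousOn.clm_apply
        (hScont.comp (continuous_const.sub continuous_id).continuousOn ?_) (hf.mono hIio)
      intro x hx
      exact Set.mem_Ioi.mpr (sub_pos.mpr hx)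
  have hmeasg : MeasureTheory.AEStronglyMeasurable g (volume.restrict (Set.Iio t)) :=
    hgcont.aestronglyMeasurable measurableSet_Iio
  have hbound_ae : ∀ᵐ τ ∂(volume.restrict (Set.Iio t)), ‖g τ‖ ≤ K * φ (t - τ) :=
    (MeasureTheory.ae_restrict_iff' measurableSet_Iio).mpr
      (Filter.Eventually.of_forall hbound)
  have hint_Iio : MeasureTheory.IntegrableOn g (Set.Iio t) :=
    MeasureTheory.Integrable.mono' (hBint.const_mul K) hmeasg hbound_ae
  have hint : MeasureTheory.IntegrableOn g (Set.Iic t) :=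
    (integrableOn_Iic_iff_integrableOn_Iio).mpr hint_Iio
  refine ⟨hint, ?_⟩
  have hIicIio : (∫ τ in Set.Iic t, g τ) = ∫ τ in Set.Iio t, g τ :=
    (MeasureTheory.setIntegral_congr_set (MeasureTheory.Iio_ae_eq_Iic (a := t))).symm
  rw [hIicIio]
  calc ‖∫ τ in Set.Iio t, g τ‖ ≤ ∫ τ in Set.Iio t, K * φ (t - τ) :=
        MeasureTheory.norm_integral_le_of_norm_le (hBint.const_mul K) hbound_ae
    _ = K * ∫ τ in Set.Iio t, φ (t - τ) := MeasureTheory.integral_const_mul K _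
    _ = N * M * Real.Gamma (1 - α) * c ^ (α - 1)
          * Real.exp (-η * t + ∫ r in (0:ℝ)..t, z r) := by
        rw [hBval, hK]; ring
end

section
/- Assume κ := ℓ_c/(η+ν) + ℓ_s M Γ(1−α) (λ−η−ν)^{α−1} < 1, and let v* ∈ C⁻_η be the unique fixed point of T for a given ξ ∈ H. Then ‖v*‖_{C⁻_η} ≤ (1−κ)^{−1} ‖ξ‖. If in addition ‖F_s(u)‖_Y ≤ b ‖u‖ for all u ∈ H and some b > 0, then the stable component v*_s(t) := ∫_{−∞}^t e^{ν(t−τ) + ∫_τ^t z(r) dr} e^{−z(τ)} S(t−τ)( F_s( e^{z(τ)} v*(τ) ) ) dτ satisfies ‖v*_s‖_{C⁻_η} ≤ b M Γ(1−α) (λ−η−ν)^{α−1} (1−κ)^{−1} ‖ξ‖. -/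
open MeasureTheory Set

section FixedPointBoundsAux

lemma fpb_aux_integrable {α μ : ℝ} (hα0 : 0 < α) (hα1 : α < 1) (hμ : 0 < μ) :
    IntegrableOn (fun r : ℝ => r ^ (-α) * Real.exp (-(μ * r))) (Set.Ioi 0) := by
  have h := integrableOn_rpow_mul_exp_neg_mul_rpow (p := 1) (s := -α) (b := μ)
    (by linarith) zero_lt_one hμ
  refine h.congr_fun (fun x hx => ?_) measurableSet_Ioi
  simp only [Real.rpow_one, neg_mul]

lemma fpb_aux_integral {α μ : ℝ} (hα0 : 0 < α) (hα1 : α < 1) (hμ : 0 < μ) :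
    ∫ r in Set.Ioi (0:ℝ), r ^ (-α) * Real.exp (-(μ * r))
      = Real.Gamma (1 - α) * μ ^ (α - 1) := by
  have h := Real.integral_rpow_mul_exp_neg_mul_Ioi (a := 1 - α) (r := μ) (by linarith) hμ
  rw [show (1 - α) - 1 = -α by ring] at h
  rw [h, one_div, Real.inv_rpow hμ.le, ← Real.rpow_neg hμ.le, show -(1-α) = α - 1 by ring,
    mul_comm]

lemma fpb_aux_shift_integral (t : ℝ) (g : ℝ → ℝ) :
    ∫ τ in Set.Iic t, g (t - τ) = ∫ r in Set.Ioi (0:ℝ), g r := by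
  have h₁ : MeasurePreserving (fun τ : ℝ => t - τ) volume volume :=
    Measure.measurePreserving_sub_left volume t
  have h₂ : MeasurableEmbedding (fun τ : ℝ => t - τ) :=
    (MeasurableEquiv.subLeft t).measurableEmbedding
  have h₃ : (fun τ : ℝ => t - τ) ⁻¹' (Set.Ioi 0) = Set.Iio t := by
    ext x; simp [sub_pos]
  rw [setIntegral_congr_set (Iio_ae_eq_Iic (a := t)).symm, ← h₃,
    h₁.setIntegral_preimage_emb h₂ g _]

lemma fpb_aux_shift_integrable (t : ℝ) {g : ℝ → ℝ} (hg : IntegrableOn g (Set.Ioi 0)) :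
    IntegrableOn (fun τ => g (t - τ)) (Set.Iic t) := by
  have h₁ : MeasurePreserving (fun τ : ℝ => t - τ) volume volume :=
    Measure.measurePreserving_sub_left volume t
  have h₂ : MeasurableEmbedding (fun τ : ℝ => t - τ) :=
    (MeasurableEquiv.subLeft t).measurableEmbedding
  have h₃ : (fun τ : ℝ => t - τ) ⁻¹' (Set.Ioi 0) = Set.Iio t := by
    ext x; simp [sub_pos]
  have h := (h₁.integrableOn_comp_preimage h₂).mpr hg
  rw [h₃] at h
  exact h.congr_set_ae (Iio_ae_eq_Iic (a := t)).symm

lemma fpb_zsplit {z : ℝ → ℝ} (hz : ContinuousOn z (Set.Iic 0)) {t : ℝ} (ht : t ≤ 0)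
    {τ : ℝ} (hτ0 : τ ≤ 0) :
    (∫ r in τ..t, z r) = (∫ s in (0:ℝ)..t, z s) - ∫ s in (0:ℝ)..τ, z s := by
  have h1 : IntervalIntegrable z volume τ 0 :=
    (hz.mono (by rw [Set.uIcc_of_le hτ0]; exact Set.Icc_subset_Iic_self)).intervalIntegrable
  have h2 : IntervalIntegrable z volume 0 t :=
    (hz.mono (by rw [Set.uIcc_of_ge ht]; exact Set.Icc_subset_Iic_self)).intervalIntegrable
  rw [← intervalIntegral.integral_add_adjacent_intervals h1 h2,
    intervalIntegral.integral_symm]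
  ring

lemma fpb_exp_int {c t : ℝ} (hc : 0 < c) (ht : t ≤ 0) :
    ∫ τ in t..(0:ℝ), Real.exp (c * (t - τ)) = (1 - Real.exp (c * t)) / c := by
  have hD : ∀ τ ∈ Set.uIcc t (0:ℝ),
      HasDerivAt (fun τ => -(Real.exp (c * (t - τ)) / c)) (Real.exp (c * (t - τ))) τ := by
    intro τ _
    have h1 : HasDerivAt (fun τ : ℝ => c * (t - τ)) (-c) τ := by
      simpa using ((hasDerivAt_id τ).const_sub t).const_mul c
    have h3 := (h1.exp.div_const c).neg
    refine h3.congr_deriv ?_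
    rw [mul_neg, neg_div, neg_neg, mul_div_assoc, div_self hc.ne', mul_one]
  rw [intervalIntegral.integral_eq_sub_of_hasDerivAt hD
    (Continuous.intervalIntegrable (by continuity) _ _)]
  simp only [sub_zero, sub_self, mul_zero, Real.exp_zero]
  field_simp
  ring

set_option maxHeartbeats 1000000 in
lemma fpb_stable_bound
    {H Y : Type*} [NormedAddCommGroup H] [NormedSpace ℝ H] [CompleteSpace H]
    [NormedAddCommGroup Y] [NormedSpace ℝ Y]
    (ν η lam M α : ℝ) (hην : 0 < η + ν) (hlam : η + ν < lam) (hM : 0 < M)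
    (hα0 : 0 < α) (hα1 : α < 1)
    (z : ℝ → ℝ) (hz : ContinuousOn z (Set.Iic 0))
    (S : ℝ → Y →L[ℝ] H)
    (hS : ∀ r > (0:ℝ), ‖S r‖ ≤ M * r ^ (-α) * Real.exp (-lam * r))
    (Fs : H → Y) (b : ℝ) (hb : 0 ≤ b) (hFs : ∀ u : H, ‖Fs u‖ ≤ b * ‖u‖)
    (vstar : ℝ → H) (N : ℝ) (hN0 : 0 ≤ N)
    (hNb : ∀ τ ≤ (0:ℝ), Real.exp (η * τ - ∫ s in (0:ℝ)..τ, z s) * ‖vstar τ‖ ≤ N)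
    (t : ℝ) (ht : t ≤ 0) :
    Real.exp (η * t - ∫ s in (0:ℝ)..t, z s) *
      ‖∫ τ in Set.Iic t,
          (Real.exp (ν * (t - τ) + ∫ r in τ..t, z r) * Real.exp (-z τ)) •
            (S (t - τ)) (Fs (Real.exp (z τ) • vstar τ))‖
      ≤ b * M * Real.Gamma (1 - α) * (lam - η - ν) ^ (α - 1) * N := by
  have hμ : 0 < lam - η - ν := by linarith
  have hΓ : 0 < Real.Gamma (1 - α) := Real.Gamma_pos_of_pos (by linarith)
  set It := ∫ s in (0:ℝ)..t, z s with hIt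
  set K := b * M * N * Real.exp (It - η * t) with hKdef
  have hK : 0 ≤ K := by positivity
  have hg0 : IntegrableOn (fun r : ℝ => K * (r ^ (-α) * Real.exp (-((lam - η - ν) * r))))
      (Set.Ioi 0) := (fpb_aux_integrable hα0 hα1 hμ).const_mul K
  have hgint : IntegrableOn
      (fun τ : ℝ => K * ((t - τ) ^ (-α) * Real.exp (-((lam - η - ν) * (t - τ)))))
      (Set.Iic t) := fpb_aux_shift_integrable t hg0
  have key : ‖∫ τ in Set.Iic t,
      (Real.exp (ν * (t - τ) + ∫ r in τ..t, z r) * Real.exp (-z τ)) •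
        (S (t - τ)) (Fs (Real.exp (z τ) • vstar τ))‖
      ≤ ∫ τ in Set.Iic t,
          K * ((t - τ) ^ (-α) * Real.exp (-((lam - η - ν) * (t - τ)))) := by
    refine norm_integral_le_of_norm_le hgint ?_
    have hne : ∀ᵐ τ ∂(volume.restrict (Set.Iic t)), τ ≠ t := by
      refine ae_restrict_of_ae ?_
      have hset : {τ : ℝ | ¬ τ ≠ t} = {t} := by ext x; simp
      rw [ae_iff, hset]
      exact measure_singleton t
    filter_upwards [hne, ae_restrict_mem measurableSet_Iic] with τ hne' hτt
    have hτ : τ < t := lt_of_le_of_ne hτt hne'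
    have hτ0 : τ ≤ 0 := hτ.le.trans ht
    have hr : 0 < t - τ := sub_pos.mpr hτ
    have hvτ : ‖vstar τ‖ ≤ N * Real.exp ((∫ s in (0:ℝ)..τ, z s) - η * τ) := by
      have h := hNb τ hτ0
      calc ‖vstar τ‖
          = Real.exp ((∫ s in (0:ℝ)..τ, z s) - η * τ) *
              (Real.exp (η * τ - ∫ s in (0:ℝ)..τ, z s) * ‖vstar τ‖) := by
            rw [← mul_assoc, ← Real.exp_add]
            simp
        _ ≤ Real.exp ((∫ s in (0:ℝ)..τ, z s) - η * τ) * N :=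
            mul_le_mul_of_nonneg_left h (Real.exp_pos _).le
        _ = N * Real.exp ((∫ s in (0:ℝ)..τ, z s) - η * τ) := mul_comm _ _
    have hnsmul : ‖Real.exp (z τ) • vstar τ‖ = Real.exp (z τ) * ‖vstar τ‖ := by
      rw [norm_smul, Real.norm_eq_abs, abs_of_pos (Real.exp_pos _)]
    have hSle : ‖(S (t - τ)) (Fs (Real.exp (z τ) • vstar τ))‖
        ≤ (M * (t - τ) ^ (-α) * Real.exp (-lam * (t - τ))) *
          (b * (Real.exp (z τ) * (N * Real.exp ((∫ s in (0:ℝ)..τ, z s) - η * τ)))) := by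
      calc ‖(S (t - τ)) (Fs (Real.exp (z τ) • vstar τ))‖
          ≤ ‖S (t - τ)‖ * ‖Fs (Real.exp (z τ) • vstar τ)‖ :=
            ContinuousLinearMap.le_opNorm _ _
        _ ≤ (M * (t - τ) ^ (-α) * Real.exp (-lam * (t - τ))) *
            (b * (Real.exp (z τ) * (N * Real.exp ((∫ s in (0:ℝ)..τ, z s) - η * τ)))) := by
            refine mul_le_mul (hS _ hr) ?_ (norm_nonneg _) (by positivity)
            calc ‖Fs (Real.exp (z τ) • vstar τ)‖
                ≤ b * ‖Real.exp (z τ) • vstar τ‖ := hFs _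
              _ = b * (Real.exp (z τ) * ‖vstar τ‖) := by rw [hnsmul]
              _ ≤ b * (Real.exp (z τ) *
                    (N * Real.exp ((∫ s in (0:ℝ)..τ, z s) - η * τ))) := by
                  exact mul_le_mul_of_nonneg_left
                    (mul_le_mul_of_nonneg_left hvτ (Real.exp_pos _).le) hb
    calc ‖(Real.exp (ν * (t - τ) + ∫ r in τ..t, z r) * Real.exp (-z τ)) •
            (S (t - τ)) (Fs (Real.exp (z τ) • vstar τ))‖
        = (Real.exp (ν * (t - τ) + ∫ r in τ..t, z r) * Real.exp (-z τ)) *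
            ‖(S (t - τ)) (Fs (Real.exp (z τ) • vstar τ))‖ := by
          rw [norm_smul, Real.norm_eq_abs, abs_of_pos (by positivity)]
      _ ≤ (Real.exp (ν * (t - τ) + ∫ r in τ..t, z r) * Real.exp (-z τ)) *
            ((M * (t - τ) ^ (-α) * Real.exp (-lam * (t - τ))) *
              (b * (Real.exp (z τ) * (N * Real.exp ((∫ s in (0:ℝ)..τ, z s) - η * τ)))))
          := mul_le_mul_of_nonneg_left hSle (by positivity)
      _ = K * ((t - τ) ^ (-α) * Real.exp (-((lam - η - ν) * (t - τ)))) := by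
          rw [fpb_zsplit hz ht hτ0, hKdef]
          have e1 : Real.exp (ν * (t - τ) + (It - ∫ s in (0:ℝ)..τ, z s)) *
              Real.exp (-z τ) * Real.exp (-lam * (t - τ)) * Real.exp (z τ) *
              Real.exp ((∫ s in (0:ℝ)..τ, z s) - η * τ)
              = Real.exp (It - η * t) * Real.exp (-((lam - η - ν) * (t - τ))) := by
            rw [← Real.exp_add, ← Real.exp_add, ← Real.exp_add, ← Real.exp_add,
              ← Real.exp_add]
            congr 1
            ring
          linear_combination (M * b * N * (t - τ) ^ (-α)) * e1
  calc Real.exp (η * t - It) *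
      ‖∫ τ in Set.Iic t,
          (Real.exp (ν * (t - τ) + ∫ r in τ..t, z r) * Real.exp (-z τ)) •
            (S (t - τ)) (Fs (Real.exp (z τ) • vstar τ))‖
      ≤ Real.exp (η * t - It) *
          ∫ τ in Set.Iic t, K * ((t - τ) ^ (-α) * Real.exp (-((lam - η - ν) * (t - τ))))
        := mul_le_mul_of_nonneg_left key (Real.exp_pos _).le
    _ = Real.exp (η * t - It) * (K * (Real.Gamma (1 - α) * (lam - η - ν) ^ (α - 1))) := by
        rw [integral_const_mul,
          fpb_aux_shift_integral t (fun r => r ^ (-α) * Real.exp (-((lam - η - ν) * r))),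
          fpb_aux_integral hα0 hα1 hμ]
    _ = b * M * Real.Gamma (1 - α) * (lam - η - ν) ^ (α - 1) * N := by
        rw [hKdef]
        have e2 : Real.exp (η * t - It) * Real.exp (It - η * t) = 1 := by
          rw [← Real.exp_add]; simp
        linear_combination
          (b * M * N * (Real.Gamma (1 - α) * (lam - η - ν) ^ (α - 1))) * e2

set_option maxHeartbeats 1000000 in
lemma fpb_center_bound
    {H : Type*} [NormedAddCommGroup H] [NormedSpace ℝ H] [CompleteSpace H]
    (ν η : ℝ) (hην : 0 < η + ν)
    (z : ℝ → ℝ) (hz : ContinuousOn z (Set.Iic 0))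
    (Fc : H → H) (c : ℝ) (hc : 0 ≤ c) (hFc : ∀ u : H, ‖Fc u‖ ≤ c * ‖u‖)
    (vstar : ℝ → H) (N : ℝ) (hN0 : 0 ≤ N)
    (hNb : ∀ τ ≤ (0:ℝ), Real.exp (η * τ - ∫ s in (0:ℝ)..τ, z s) * ‖vstar τ‖ ≤ N)
    (t : ℝ) (ht : t ≤ 0) :
    Real.exp (η * t - ∫ s in (0:ℝ)..t, z s) *
      ‖∫ τ in (0:ℝ)..t,
          (Real.exp (ν * (t - τ) + ∫ r in τ..t, z r) * Real.exp (-z τ)) •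
            Fc (Real.exp (z τ) • vstar τ)‖
      ≤ c / (η + ν) * N := by
  set It := ∫ s in (0:ℝ)..t, z s with hIt
  set K := c * N * Real.exp (It - η * t) with hKdef
  have hK : 0 ≤ K := by positivity
  have hgi : IntervalIntegrable (fun τ => K * Real.exp ((η + ν) * (t - τ))) volume 0 t :=
    Continuous.intervalIntegrable (by continuity) _ _
  have key : ‖∫ τ in (0:ℝ)..t,
      (Real.exp (ν * (t - τ) + ∫ r in τ..t, z r) * Real.exp (-z τ)) •
        Fc (Real.exp (z τ) • vstar τ)‖
      ≤ |∫ τ in (0:ℝ)..t, K * Real.exp ((η + ν) * (t - τ))| := by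
    refine intervalIntegral.norm_integral_le_abs_of_norm_le ?_ hgi
    filter_upwards [ae_restrict_mem measurableSet_uIoc] with τ hτ
    rw [Set.uIoc, min_eq_right ht, max_eq_left ht] at hτ
    have hτt : t ≤ τ := hτ.1.le
    have hτ0 : τ ≤ 0 := hτ.2
    have hvτ : ‖vstar τ‖ ≤ N * Real.exp ((∫ s in (0:ℝ)..τ, z s) - η * τ) := by
      have h := hNb τ hτ0
      calc ‖vstar τ‖
          = Real.exp ((∫ s in (0:ℝ)..τ, z s) - η * τ) *
              (Real.exp (η * τ - ∫ s in (0:ℝ)..τ, z s) * ‖vstar τ‖) := by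
            rw [← mul_assoc, ← Real.exp_add]; simp
        _ ≤ Real.exp ((∫ s in (0:ℝ)..τ, z s) - η * τ) * N :=
            mul_le_mul_of_nonneg_left h (Real.exp_pos _).le
        _ = N * Real.exp ((∫ s in (0:ℝ)..τ, z s) - η * τ) := mul_comm _ _
    have hnsmul : ‖Real.exp (z τ) • vstar τ‖ = Real.exp (z τ) * ‖vstar τ‖ := by
      rw [norm_smul, Real.norm_eq_abs, abs_of_pos (Real.exp_pos _)]
    calc ‖(Real.exp (ν * (t - τ) + ∫ r in τ..t, z r) * Real.exp (-z τ)) •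
            Fc (Real.exp (z τ) • vstar τ)‖
        = (Real.exp (ν * (t - τ) + ∫ r in τ..t, z r) * Real.exp (-z τ)) *
            ‖Fc (Real.exp (z τ) • vstar τ)‖ := by
          rw [norm_smul, Real.norm_eq_abs, abs_of_pos (by positivity)]
      _ ≤ (Real.exp (ν * (t - τ) + ∫ r in τ..t, z r) * Real.exp (-z τ)) *
            (c * (Real.exp (z τ) * (N * Real.exp ((∫ s in (0:ℝ)..τ, z s) - η * τ)))) := by
          refine mul_le_mul_of_nonneg_left ?_ (by positivity)
          calc ‖Fc (Real.exp (z τ) • vstar τ)‖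
              ≤ c * ‖Real.exp (z τ) • vstar τ‖ := hFc _
            _ = c * (Real.exp (z τ) * ‖vstar τ‖) := by rw [hnsmul]
            _ ≤ c * (Real.exp (z τ) *
                  (N * Real.exp ((∫ s in (0:ℝ)..τ, z s) - η * τ))) :=
                mul_le_mul_of_nonneg_left
                  (mul_le_mul_of_nonneg_left hvτ (Real.exp_pos _).le) hc
      _ = K * Real.exp ((η + ν) * (t - τ)) := by
          rw [fpb_zsplit hz ht hτ0, hKdef]
          have e1 : Real.exp (ν * (t - τ) + (It - ∫ s in (0:ℝ)..τ, z s)) *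
              Real.exp (-z τ) * Real.exp (z τ) *
              Real.exp ((∫ s in (0:ℝ)..τ, z s) - η * τ)
              = Real.exp (It - η * t) * Real.exp ((η + ν) * (t - τ)) := by
            rw [← Real.exp_add, ← Real.exp_add, ← Real.exp_add, ← Real.exp_add]
            congr 1; ring
          linear_combination (c * N) * e1
  have hval : |∫ τ in (0:ℝ)..t, K * Real.exp ((η + ν) * (t - τ))|
      = K * ((1 - Real.exp ((η + ν) * t)) / (η + ν)) := by
    rw [intervalIntegral.integral_symm, intervalIntegral.integral_const_mul,
      fpb_exp_int hην ht, abs_neg, abs_of_nonneg]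
    have h1 : Real.exp ((η + ν) * t) ≤ 1 := Real.exp_le_one_iff.mpr (by nlinarith)
    exact mul_nonneg hK (div_nonneg (by linarith) hην.le)
  calc Real.exp (η * t - It) * ‖∫ τ in (0:ℝ)..t,
          (Real.exp (ν * (t - τ) + ∫ r in τ..t, z r) * Real.exp (-z τ)) •
            Fc (Real.exp (z τ) • vstar τ)‖
      ≤ Real.exp (η * t - It) * (K * ((1 - Real.exp ((η + ν) * t)) / (η + ν))) := by
        rw [← hval]; exact mul_le_mul_of_nonneg_left key (Real.exp_pos _).le
    _ = c * N * ((1 - Real.exp ((η + ν) * t)) / (η + ν)) := by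
        have e2 : Real.exp (η * t - It) * Real.exp (It - η * t) = 1 := by
          rw [← Real.exp_add]; simp
        rw [hKdef]
        linear_combination (c * N * ((1 - Real.exp ((η + ν) * t)) / (η + ν))) * e2
    _ ≤ c / (η + ν) * N := by
        have h1 : Real.exp ((η + ν) * t) ≤ 1 := Real.exp_le_one_iff.mpr (by nlinarith)
        have h2 : 0 < Real.exp ((η + ν) * t) := Real.exp_pos _
        rw [div_eq_mul_inv, div_eq_mul_inv]
        have h4 : (0:ℝ) ≤ (η + ν)⁻¹ := by positivity
        nlinarith [mul_nonneg (mul_nonneg (mul_nonneg hc hN0) h4) h2.le]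

end FixedPointBoundsAux


/-- The weighted norm of the space `C⁻_η` (Definition 3.3 of the paper):
`‖v‖_{C⁻_η} = sup_{t ≤ 0} e^{ηt − ∫_0^t z(s) ds} ‖v t‖`. -/
noncomputable def cetaNorm {H : Type*} [NormedAddCommGroup H]
    (η : ℝ) (z : ℝ → ℝ) (v : ℝ → H) : ℝ :=
  sSup ((fun t => Real.exp (η * t - ∫ s in (0:ℝ)..t, z s) * ‖v t‖) '' Set.Iic 0)

/-- Membership in the space `C⁻_η`: `v : (−∞,0] → H` is continuous with finite
weighted norm. -/
def memCeta {H : Type*} [NormedAddCommGroup H] (η : ℝ) (z : ℝ → ℝ) (v : ℝ → H) : Prop :=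
  ContinuousOn v (Set.Iic 0) ∧
    BddAbove ((fun t => Real.exp (η * t - ∫ s in (0:ℝ)..t, z s) * ‖v t‖) '' Set.Iic 0)

/-- The Lyapunov–Perron operator `T` of Definition 3.4 of the paper. -/
noncomputable def lpOp {H Y : Type*} [NormedAddCommGroup H] [NormedSpace ℝ H]
    [NormedAddCommGroup Y] [NormedSpace ℝ Y]
    (ν : ℝ) (z : ℝ → ℝ) (S : ℝ → Y →L[ℝ] H) (Fc : H → H) (Fs : H → Y)
    (ξ : H) (v : ℝ → H) : ℝ → H := fun t =>
  Real.exp (ν * t + ∫ s in (0:ℝ)..t, z s) • ξ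
  + (∫ τ in (0:ℝ)..t,
      (Real.exp (ν * (t - τ) + ∫ r in τ..t, z r) * Real.exp (-z τ)) •
        Fc (Real.exp (z τ) • v τ))
  + ∫ τ in Set.Iic t,
      (Real.exp (ν * (t - τ) + ∫ r in τ..t, z r) * Real.exp (-z τ)) •
        (S (t - τ)) (Fs (Real.exp (z τ) • v τ))

set_option maxHeartbeats 1000000 in
/-- (Lemma 4.1 of the paper, abstracted.)  Assume the contraction
condition `κ < 1` and let `v*` be the fixed point of the Lyapunov–Perron operator `T`
for a given `ξ`.  Then `‖v*‖_{C⁻_η} ≤ (1−κ)⁻¹ ‖ξ‖`; and if moreover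
`‖F_s(u)‖ ≤ b ‖u‖` for all `u`, then the stable component
`v*_s(t) = ∫_{−∞}^t e^{ν(t−τ) + ∫_τ^t z} e^{−z(τ)} S(t−τ)(F_s(e^{z(τ)} v*(τ))) dτ`
satisfies `‖v*_s‖_{C⁻_η} ≤ b M Γ(1−α) (λ−η−ν)^{α−1} (1−κ)⁻¹ ‖ξ‖`. -/
theorem fixed_point_bounds
    {H Y : Type*} [NormedAddCommGroup H] [NormedSpace ℝ H] [CompleteSpace H]
    [NormedAddCommGroup Y] [NormedSpace ℝ Y]
    (ν η lam M α : ℝ) (hην : 0 < η + ν) (hlam : η + ν < lam) (hM : 0 < M)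
    (hα : α ∈ Set.Ioo (0:ℝ) 1)
    (z : ℝ → ℝ) (hz : ContinuousOn z (Set.Iic 0))
    (S : ℝ → Y →L[ℝ] H) (hScont : ContinuousOn S (Set.Ioi 0))
    (hS : ∀ r > (0:ℝ), ‖S r‖ ≤ M * r ^ (-α) * Real.exp (-lam * r))
    (ℓc ℓs : NNReal) (Fc : H → H) (Fs : H → Y)
    (hFc : LipschitzWith ℓc Fc) (hFc0 : Fc 0 = 0)
    (hFs : LipschitzWith ℓs Fs) (hFs0 : Fs 0 = 0)
    (κ : ℝ)
    (hκdef : κ = ℓc / (η + ν) + ℓs * M * Real.Gamma (1 - α) * (lam - η - ν) ^ (α - 1))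
    (hκ : κ < 1) (ξ : H)
    (vstar : ℝ → H) (hmem : memCeta η z vstar)
    (hfix : ∀ t ≤ (0:ℝ), lpOp ν z S Fc Fs ξ vstar t = vstar t) :
    cetaNorm η z vstar ≤ (1 - κ)⁻¹ * ‖ξ‖ ∧
    ∀ b > (0:ℝ), (∀ u : H, ‖Fs u‖ ≤ b * ‖u‖) →
      cetaNorm η z (fun t => ∫ τ in Set.Iic t,
          (Real.exp (ν * (t - τ) + ∫ r in τ..t, z r) * Real.exp (-z τ)) •
            (S (t - τ)) (Fs (Real.exp (z τ) • vstar τ)))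
        ≤ b * M * Real.Gamma (1 - α) * (lam - η - ν) ^ (α - 1) * (1 - κ)⁻¹ * ‖ξ‖ := by
  obtain ⟨hα0, hα1⟩ := hα
  obtain ⟨hcont, hbdd⟩ := hmem
  have hμ : 0 < lam - η - ν := by linarith
  have hΓ : 0 < Real.Gamma (1 - α) := Real.Gamma_pos_of_pos (by linarith)
  have hrp : 0 < (lam - η - ν) ^ (α - 1) := Real.rpow_pos_of_pos hμ _
  set N := cetaNorm η z vstar with hNdef
  have hNb : ∀ τ ≤ (0:ℝ), Real.exp (η * τ - ∫ s in (0:ℝ)..τ, z s) * ‖vstar τ‖ ≤ N :=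
    fun τ hτ => le_csSup hbdd ⟨τ, hτ, rfl⟩
  have hN0 : 0 ≤ N := le_trans (by positivity) (hNb 0 le_rfl)
  have hκ0 : 0 ≤ κ := by
    rw [hκdef]
    have h1 : (0:ℝ) ≤ (ℓc:ℝ) / (η + ν) := div_nonneg ℓc.coe_nonneg hην.le
    have h2 : (0:ℝ) ≤ (ℓs:ℝ) * M * Real.Gamma (1 - α) * (lam - η - ν) ^ (α - 1) := by
      have := ℓs.coe_nonneg
      positivity
    linarith
  have hFcb : ∀ u : H, ‖Fc u‖ ≤ (ℓc:ℝ) * ‖u‖ := by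
    intro u
    have h := hFc.dist_le_mul u 0
    simpa [hFc0, dist_eq_norm] using h
  have hFsb : ∀ u : H, ‖Fs u‖ ≤ (ℓs:ℝ) * ‖u‖ := by
    intro u
    have h := hFs.dist_le_mul u 0
    simpa [hFs0, dist_eq_norm] using h
  have hpt : ∀ t ≤ (0:ℝ),
      Real.exp (η * t - ∫ s in (0:ℝ)..t, z s) * ‖vstar t‖ ≤ ‖ξ‖ + κ * N := by
    intro t ht
    rw [← hfix t ht]
    have hB := fpb_center_bound ν η hην z hz Fc (ℓc:ℝ) ℓc.coe_nonneg hFcb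
      vstar N hN0 hNb t ht
    have hC := fpb_stable_bound ν η lam M α hην hlam hM hα0 hα1 z hz S hS Fs (ℓs:ℝ)
      ℓs.coe_nonneg hFsb vstar N hN0 hNb t ht
    have hA : Real.exp (η * t - ∫ s in (0:ℝ)..t, z s) *
        ‖Real.exp (ν * t + ∫ s in (0:ℝ)..t, z s) • ξ‖ ≤ ‖ξ‖ := by
      rw [norm_smul, Real.norm_eq_abs, abs_of_pos (Real.exp_pos _), ← mul_assoc,
        ← Real.exp_add]
      have h1 : Real.exp ((η * t - ∫ s in (0:ℝ)..t, z s) + (ν * t + ∫ s in (0:ℝ)..t, z s))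
          ≤ 1 := Real.exp_le_one_iff.mpr (by nlinarith)
      calc Real.exp ((η * t - ∫ s in (0:ℝ)..t, z s) + (ν * t + ∫ s in (0:ℝ)..t, z s)) * ‖ξ‖
          ≤ 1 * ‖ξ‖ := mul_le_mul_of_nonneg_right h1 (norm_nonneg _)
        _ = ‖ξ‖ := one_mul _
    calc Real.exp (η * t - ∫ s in (0:ℝ)..t, z s) * ‖lpOp ν z S Fc Fs ξ vstar t‖
        ≤ Real.exp (η * t - ∫ s in (0:ℝ)..t, z s) *
            (‖Real.exp (ν * t + ∫ s in (0:ℝ)..t, z s) • ξ‖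
            + ‖∫ τ in (0:ℝ)..t,
                (Real.exp (ν * (t - τ) + ∫ r in τ..t, z r) * Real.exp (-z τ)) •
                  Fc (Real.exp (z τ) • vstar τ)‖
            + ‖∫ τ in Set.Iic t,
                (Real.exp (ν * (t - τ) + ∫ r in τ..t, z r) * Real.exp (-z τ)) •
                  (S (t - τ)) (Fs (Real.exp (z τ) • vstar τ))‖) := by
          refine mul_le_mul_of_nonneg_left ?_ (Real.exp_pos _).le
          exact norm_add₃_le
      _ ≤ ‖ξ‖ + ((ℓc:ℝ) / (η + ν) * N
            + (ℓs:ℝ) * M * Real.Gamma (1 - α) * (lam - η - ν) ^ (α - 1) * N) := by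
          rw [mul_add, mul_add]
          have := add_le_add (add_le_add hA hB) hC
          linarith
      _ = ‖ξ‖ + κ * N := by rw [hκdef]; ring
  have part1 : N ≤ (1 - κ)⁻¹ * ‖ξ‖ := by
    have hsup : N ≤ ‖ξ‖ + κ * N := by
      refine Real.sSup_le ?_ (by positivity)
      rintro x ⟨τ, hτ, rfl⟩
      exact hpt τ hτ
    rw [inv_mul_eq_div, le_div_iff₀ (by linarith)]
    nlinarith
  refine ⟨part1, ?_⟩
  intro b hb hFsb'
  have hinv : (0:ℝ) < (1 - κ)⁻¹ := by
    have : (0:ℝ) < 1 - κ := by linarith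
    positivity
  refine Real.sSup_le ?_ (by positivity)
  rintro x ⟨τ, hτ, rfl⟩
  have h := fpb_stable_bound ν η lam M α hην hlam hM hα0 hα1 z hz S hS Fs b hb.le
    hFsb' vstar N hN0 hNb τ hτ
  calc Real.exp (η * τ - ∫ s in (0:ℝ)..τ, z s) *
        ‖∫ σ in Set.Iic τ,
          (Real.exp (ν * (τ - σ) + ∫ r in σ..τ, z r) * Real.exp (-z σ)) •
            (S (τ - σ)) (Fs (Real.exp (z σ) • vstar σ))‖
      ≤ b * M * Real.Gamma (1 - α) * (lam - η - ν) ^ (α - 1) * N := h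
    _ ≤ b * M * Real.Gamma (1 - α) * (lam - η - ν) ^ (α - 1) * ((1 - κ)⁻¹ * ‖ξ‖) := by
        refine mul_le_mul_of_nonneg_left part1 (by positivity)
    _ = b * M * Real.Gamma (1 - α) * (lam - η - ν) ^ (α - 1) * (1 - κ)⁻¹ * ‖ξ‖ := by ring
end
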